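/- (Prediction dynamics, preview case) For any trajectory of Σ_aug^prev and any t ≥ 0, x̂_τ(t+1) = A x̂_τ(t) + B u(t) + A^τ F₀ d₀(t) + A^{τ-p} F_p δ_f(t). -/

import Mathlib

open Finset

/-- A trajectory of the augmented preview system `Σ_aug^prev`: `x` is the state sequence,
`uu t i` is the delayed-input component `u_i(t)` (meaningful for `1 ≤ i ≤ τ`),
`dd t j` is the previewed-disturbance component `δ_j(t)` (meaningful for `1 ≤ j ≤ p`),
`u` is the control input, `d0` the non-measurable disturbance, and `df` the incoming
previewed disturbance. The dynamics are
`x(t+1) = A x(t) + B u₁(t) + F₀ d₀(t) + F_p δ₁(t)`, `u_i(t+1) = u_{i+1}(t)` for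
`1 ≤ i ≤ τ-1`, `u_τ(t+1) = u(t)`, `δ_j(t+1) = δ_{j+1}(t)` for `1 ≤ j ≤ p-1`, and
`δ_p(t+1) = δ_f(t)`. -/
def IsPrevTraj {n m k₀ l : ℕ} (τ p : ℕ) (A : Matrix (Fin n) (Fin n) ℝ)
    (B : Matrix (Fin n) (Fin m) ℝ) (F₀ : Matrix (Fin n) (Fin k₀) ℝ)
    (Fp : Matrix (Fin n) (Fin l) ℝ) (x : ℕ → Fin n → ℝ) (uu : ℕ → ℕ → Fin m → ℝ)
    (dd : ℕ → ℕ → Fin l → ℝ) (u : ℕ → Fin m → ℝ) (d₀ : ℕ → Fin k₀ → ℝ)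
    (df : ℕ → Fin l → ℝ) : Prop :=
  ∀ t : ℕ,
    x (t + 1) =
      A.mulVec (x t) + B.mulVec (uu t 1) + F₀.mulVec (d₀ t) + Fp.mulVec (dd t 1) ∧
    (∀ i : ℕ, 1 ≤ i → i < τ → uu (t + 1) i = uu t (i + 1)) ∧
    uu (t + 1) τ = u t ∧
    (∀ j : ℕ, 1 ≤ j → j < p → dd (t + 1) j = dd t (j + 1)) ∧
    dd (t + 1) p = df t

/-- The prediction `x̂_τ(t) = A^τ x(t) + Σ_{i=1}^{τ} A^{i-1} B u_{τ-i+1}(t)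
+ Σ_{j=τ-p+1}^{τ} A^{j-1} F_p δ_{τ-j+1}(t)`. -/
def xhatP {n m l : ℕ} (τ p : ℕ) (A : Matrix (Fin n) (Fin n) ℝ)
    (B : Matrix (Fin n) (Fin m) ℝ) (Fp : Matrix (Fin n) (Fin l) ℝ)
    (x : ℕ → Fin n → ℝ) (uu : ℕ → ℕ → Fin m → ℝ) (dd : ℕ → ℕ → Fin l → ℝ)
    (t : ℕ) : Fin n → ℝ :=
  (A ^ τ).mulVec (x t) +
    (∑ i ∈ Finset.Icc 1 τ, (A ^ (i - 1)).mulVec (B.mulVec (uu t (τ - i + 1)))) +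
    ∑ j ∈ Finset.Icc (τ - p + 1) τ, (A ^ (j - 1)).mulVec (Fp.mulVec (dd t (τ - j + 1)))

/-- (Prediction dynamics, preview case) For any trajectory of `Σ_aug^prev` and any `t ≥ 0`,
`x̂_τ(t+1) = A x̂_τ(t) + B u(t) + A^τ F₀ d₀(t) + A^{τ-p} F_p δ_f(t)`. -/
lemma mulVec_sum_aux {a b : ℕ} (M : Matrix (Fin a) (Fin b) ℝ) (s : Finset ℕ)
    (f : ℕ → Fin b → ℝ) : M.mulVec (∑ i ∈ s, f i) = ∑ i ∈ s, M.mulVec (f i) := by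
  simp only [← Matrix.mulVecLin_apply, map_sum]

theorem prev_prediction_dynamics (n m k₀ l : ℕ) (hn : 0 < n) (hm : 0 < m) (hk : 0 < k₀)
    (hl : 0 < l) (τ p : ℕ) (hτ : 1 ≤ τ) (hp1 : 1 ≤ p) (hpτ : p ≤ τ)
    (A : Matrix (Fin n) (Fin n) ℝ) (B : Matrix (Fin n) (Fin m) ℝ)
    (F₀ : Matrix (Fin n) (Fin k₀) ℝ) (Fp : Matrix (Fin n) (Fin l) ℝ)
    (x : ℕ → Fin n → ℝ) (uu : ℕ → ℕ → Fin m → ℝ) (dd : ℕ → ℕ → Fin l → ℝ)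
    (u : ℕ → Fin m → ℝ) (d₀ : ℕ → Fin k₀ → ℝ) (df : ℕ → Fin l → ℝ)
    (htraj : IsPrevTraj τ p A B F₀ Fp x uu dd u d₀ df) :
    ∀ t : ℕ,
      xhatP τ p A B Fp x uu dd (t + 1) =
        A.mulVec (xhatP τ p A B Fp x uu dd t) + B.mulVec (u t) +
          (A ^ τ).mulVec (F₀.mulVec (d₀ t)) + (A ^ (τ - p)).mulVec (Fp.mulVec (df t)) := by
  intro t
  obtain ⟨hx, huu, huτ, hdd, hdp⟩ := htraj t
  have hmap1 : (Finset.Icc 1 (τ - 1)).map ⟨(· + 1), add_left_injective 1⟩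
      = Finset.Icc 2 τ := by
    ext i
    simp only [Finset.mem_map, Finset.mem_Icc, Function.Embedding.coeFn_mk]
    constructor
    · rintro ⟨a, ha, rfl⟩; omega
    · intro h; exact ⟨i - 1, by omega, by omega⟩
  have hmap2 : (Finset.Icc (τ - p + 1) (τ - 1)).map ⟨(· + 1), add_left_injective 1⟩
      = Finset.Icc (τ - p + 2) τ := by
    ext i
    simp only [Finset.mem_map, Finset.mem_Icc, Function.Embedding.coeFn_mk]
    constructor
    · rintro ⟨a, ha, rfl⟩; omega
    · intro h; exact ⟨i - 1, by omega, by omega⟩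
  have hins1 : Finset.Icc 1 τ = insert 1 (Finset.Icc 2 τ) := by
    ext i; simp only [Finset.mem_insert, Finset.mem_Icc]; omega
  have hins2 : Finset.Icc (τ - p + 1) τ = insert (τ - p + 1) (Finset.Icc (τ - p + 2) τ) := by
    ext i; simp only [Finset.mem_insert, Finset.mem_Icc]; omega
  have hins1' : Finset.Icc 1 τ = insert τ (Finset.Icc 1 (τ - 1)) := by
    ext i; simp only [Finset.mem_insert, Finset.mem_Icc]; omega
  have hins2' : Finset.Icc (τ - p + 1) τ = insert τ (Finset.Icc (τ - p + 1) (τ - 1)) := by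
    ext i; simp only [Finset.mem_insert, Finset.mem_Icc]; omega
  have hL : xhatP τ p A B Fp x uu dd (t + 1) =
      (A ^ (τ + 1)).mulVec (x t) + (A ^ τ).mulVec (B.mulVec (uu t 1))
      + (A ^ τ).mulVec (F₀.mulVec (d₀ t)) + (A ^ τ).mulVec (Fp.mulVec (dd t 1))
      + B.mulVec (u t)
      + (∑ j ∈ Finset.Icc 1 (τ - 1), (A ^ j).mulVec (B.mulVec (uu t (τ - j + 1))))
      + (A ^ (τ - p)).mulVec (Fp.mulVec (df t))
      + ∑ j ∈ Finset.Icc (τ - p + 1) (τ - 1), (A ^ j).mulVec (Fp.mulVec (dd t (τ - j + 1))) := by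
    simp only [xhatP]
    rw [hx, hins1, hins2, Finset.sum_insert (by simp [Finset.mem_Icc]),
      Finset.sum_insert (by simp only [Finset.mem_Icc]; omega),
      ← hmap1, ← hmap2, Finset.sum_map, Finset.sum_map]
    simp only [Function.Embedding.coeFn_mk, Nat.add_sub_cancel, Nat.sub_self, pow_zero,
      Matrix.one_mulVec, Matrix.mulVec_add, Matrix.mulVec_mulVec]
    have e1 : τ - 1 + 1 = τ := by omega
    have e2 : τ - (τ - p + 1) + 1 = p := by omega
    rw [e1, e2, huτ, hdp]
    have e3 : ∀ j ∈ Finset.Icc 1 (τ - 1),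
        (A ^ j * B).mulVec (uu (t + 1) (τ - (j + 1) + 1))
          = (A ^ j * B).mulVec (uu t (τ - j + 1)) := by
      intro j hj
      simp only [Finset.mem_Icc] at hj
      have e4 : τ - (j + 1) + 1 = τ - j := by omega
      rw [e4, huu (τ - j) (by omega) (by omega)]
    have e5 : ∀ j ∈ Finset.Icc (τ - p + 1) (τ - 1),
        (A ^ j * Fp).mulVec (dd (t + 1) (τ - (j + 1) + 1))
          = (A ^ j * Fp).mulVec (dd t (τ - j + 1)) := by
      intro j hj
      simp only [Finset.mem_Icc] at hj
      have e4 : τ - (j + 1) + 1 = τ - j := by omega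
      rw [e4, hdd (τ - j) (by omega) (by omega)]
    rw [Finset.sum_congr rfl e3, Finset.sum_congr rfl e5, ← pow_succ]
    simp only [Matrix.one_mul]
    abel
  have hR : A.mulVec (xhatP τ p A B Fp x uu dd t) + B.mulVec (u t) +
        (A ^ τ).mulVec (F₀.mulVec (d₀ t)) + (A ^ (τ - p)).mulVec (Fp.mulVec (df t)) =
      (A ^ (τ + 1)).mulVec (x t) + (A ^ τ).mulVec (B.mulVec (uu t 1))
      + (A ^ τ).mulVec (F₀.mulVec (d₀ t)) + (A ^ τ).mulVec (Fp.mulVec (dd t 1))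
      + B.mulVec (u t)
      + (∑ j ∈ Finset.Icc 1 (τ - 1), (A ^ j).mulVec (B.mulVec (uu t (τ - j + 1))))
      + (A ^ (τ - p)).mulVec (Fp.mulVec (df t))
      + ∑ j ∈ Finset.Icc (τ - p + 1) (τ - 1), (A ^ j).mulVec (Fp.mulVec (dd t (τ - j + 1))) := by
    simp only [xhatP, Matrix.mulVec_add, mulVec_sum_aux, Matrix.mulVec_mulVec]
    have hpow : ∀ i : ℕ, 1 ≤ i → A * A ^ (i - 1) = A ^ i := by
      intro i hi
      conv_rhs => rw [show i = (i - 1) + 1 by omega]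
      rw [pow_succ']
    have e6 : ∀ i ∈ Finset.Icc 1 τ,
        (A * (A ^ (i - 1) * B)).mulVec (uu t (τ - i + 1))
          = (A ^ i * B).mulVec (uu t (τ - i + 1)) := by
      intro i hi
      simp only [Finset.mem_Icc] at hi
      rw [← Matrix.mul_assoc, hpow i hi.1]
    have e7 : ∀ i ∈ Finset.Icc (τ - p + 1) τ,
        (A * (A ^ (i - 1) * Fp)).mulVec (dd t (τ - i + 1))
          = (A ^ i * Fp).mulVec (dd t (τ - i + 1)) := by
      intro i hi
      simp only [Finset.mem_Icc] at hi
      rw [← Matrix.mul_assoc, hpow i (by omega)]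
    rw [Finset.sum_congr rfl e6, Finset.sum_congr rfl e7, hins1', hins2',
      Finset.sum_insert (by simp only [Finset.mem_Icc]; omega),
      Finset.sum_insert (by simp only [Finset.mem_Icc]; omega)]
    simp only [Nat.sub_self, zero_add, ← pow_succ']
    abel
  rw [hL, hR]
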